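/- arXiv:1402.5832 — 2 statements merged into one kernel-verified Lean document; each statement's English description precedes it below -/
import Mathlib

section
/- For every μ > 0 and γ ∈ (0,1], the quantity sup over x ∈ ℤ^{dn} of the sum over y ∈ ℤ^{dn} of exp(−μ · dist_H(x,y)^γ) is finite, where dist_H is the Hausdorff distance between the n-point configurations x and y in ℝ^d. -/
/-- The Hausdorff pseudo-distance between `n`-particle configurations in `ℝ^d`
(max-norm on `ℝ^d`). -/
noncomputable def distH {d n : ℕ} (x y : Fin n → (Fin d → ℝ)) : ℝ :=
  max (⨆ j, ⨅ k, dist (x j) (y k)) (⨆ k, ⨅ j, dist (x j) (y k))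

/-- An integer configuration viewed as a real configuration. -/
noncomputable def intConfig {d n : ℕ} (x : Fin n → (Fin d → ℤ)) : Fin n → (Fin d → ℝ) :=
  fun i j => (x i j : ℝ)

/-- An integer point viewed as a real point. -/
noncomputable def castPt {d : ℕ} (w : Fin d → ℤ) : Fin d → ℝ := fun i => (w i : ℝ)

lemma aux_pow_div_fact_le_exp (x : ℝ) (hx : 0 ≤ x) (m : ℕ) :
    x ^ m / m.factorial ≤ Real.exp x := by
  calc x ^ m / m.factorial ≤ ∑ i ∈ Finset.range (m+1), x ^ i / i.factorial := by
        refine Finset.single_le_sum (f := fun i => x ^ i / i.factorial)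
          (fun i _ => by positivity) (Finset.self_mem_range_succ m)
    _ ≤ Real.exp x := Real.sum_le_exp_of_nonneg hx _

lemma aux_summable_nat {c γ : ℝ} (hc : 0 < c) (hγ : 0 < γ) :
    Summable fun k : ℕ => Real.exp (-(c * (k : ℝ) ^ γ)) := by
  set m : ℕ := ⌈2 / γ⌉₊ with hmdef
  have hm : 2 / γ ≤ (m : ℝ) := Nat.le_ceil _
  have hm2 : (2 : ℝ) ≤ γ * m := by
    rw [div_le_iff₀ hγ] at hm; linarith
  refine (summable_nat_add_iff 1).mp ?_
  have hsum : Summable fun k : ℕ =>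
      ((m.factorial : ℝ) / c ^ m) * ((((k : ℝ) + 1) ^ (2:ℝ))⁻¹) := by
    refine Summable.mul_left _ ?_
    have := (summable_nat_add_iff (f := fun k : ℕ => (((k : ℝ)) ^ (2:ℝ))⁻¹) 1).mpr
      (Real.summable_nat_rpow_inv.mpr one_lt_two)
    simpa using this
  refine Summable.of_nonneg_of_le (fun k => (Real.exp_pos _).le) (fun k => ?_) hsum
  set t : ℝ := (k : ℝ) + 1 with htdef
  have ht : (1 : ℝ) ≤ t := by simp [htdef]
  have ht0 : (0 : ℝ) < t := by linarith
  have hx : 0 < c * t ^ γ := mul_pos hc (Real.rpow_pos_of_pos ht0 γ)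
  have h1 : Real.exp (-(c * t ^ γ)) ≤ (m.factorial : ℝ) / (c * t ^ γ) ^ m := by
    rw [Real.exp_neg]
    have h2 := aux_pow_div_fact_le_exp (c * t ^ γ) hx.le m
    have h3 : (0:ℝ) < (c * t ^ γ) ^ m / m.factorial := by positivity
    calc (Real.exp (c * t ^ γ))⁻¹ ≤ ((c * t ^ γ) ^ m / m.factorial)⁻¹ :=
          inv_anti₀ h3 h2
      _ = (m.factorial : ℝ) / (c * t ^ γ) ^ m := by rw [inv_div]
  have h4 : t ^ (2:ℝ) ≤ (t ^ γ) ^ m := by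
    rw [← Real.rpow_natCast (t ^ γ) m, ← Real.rpow_mul ht0.le]
    exact Real.rpow_le_rpow_of_exponent_le ht hm2
  have hcast : ((k + 1 : ℕ) : ℝ) = t := by push_cast [htdef]; ring
  calc Real.exp (-(c * ((k + 1 : ℕ) : ℝ) ^ γ)) = Real.exp (-(c * t ^ γ)) := by rw [hcast]
    _ ≤ (m.factorial : ℝ) / (c * t ^ γ) ^ m := h1
    _ = ((m.factorial : ℝ) / c ^ m) * ((t ^ γ) ^ m)⁻¹ := by
        rw [mul_pow]; field_simp
    _ ≤ ((m.factorial : ℝ) / c ^ m) * ((t ^ (2:ℝ))⁻¹) := by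
        refine mul_le_mul_of_nonneg_left ?_ (by positivity)
        exact inv_anti₀ (Real.rpow_pos_of_pos ht0 2) h4
    _ = ((m.factorial : ℝ) / c ^ m) * ((((k : ℝ) + 1) ^ (2:ℝ))⁻¹) := rfl

lemma aux_summable_int {c γ : ℝ} (hc : 0 < c) (hγ : 0 < γ) :
    Summable fun z : ℤ => Real.exp (-(c * |(z : ℝ)| ^ γ)) := by
  have h := aux_summable_nat hc hγ
  refine Summable.of_nat_of_neg (h.congr fun k => ?_) (h.congr fun k => ?_)
  · congr 3
    push_cast
    rw [abs_of_nonneg (Nat.cast_nonneg k)]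
  · congr 3
    push_cast
    rw [abs_neg, abs_of_nonneg (Nat.cast_nonneg k)]

set_option maxHeartbeats 1000000 in
lemma aux_pi_prod {α : Type*} : ∀ {n : ℕ} (g : Fin n → α → ℝ),
    (∀ i a, 0 ≤ g i a) → (∀ i, Summable (g i)) →
    Summable (fun f : Fin n → α => ∏ i, g i (f i)) ∧
    (∑' f : Fin n → α, ∏ i, g i (f i)) = ∏ i, ∑' a, g i a := by
  intro n
  induction n with
  | zero =>
    intro g h0 hs
    constructor
    · exact Summable.of_finite
    · simp [tsum_eq_single (fun (i : Fin 0) => (i.elim0 : α))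
        (fun f hf => absurd (funext fun i => i.elim0) hf)]
  | succ n ih =>
    intro g h0 hs
    obtain ⟨ihs, iht⟩ := ih (fun i => g i.succ) (fun i a => h0 _ a) (fun i => hs _)
    set e := (Fin.consEquiv fun _ : Fin (n+1) => α).symm with he
    have key : ∀ p : α × (Fin n → α),
        (∏ i, g i (e.symm p i)) = g 0 p.1 * ∏ i, g i.succ (p.2 i) := by
      intro p
      rw [Fin.prod_univ_succ]
      simp [he, Fin.consEquiv]
    have hmul : Summable (fun p : α × (Fin n → α) => g 0 p.1 * ∏ i, g i.succ (p.2 i)) := by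
      have hG : ∀ f : Fin n → α, 0 ≤ ∏ i, g i.succ (f i) :=
        fun f => Finset.prod_nonneg fun i _ => h0 _ _
      have := Summable.mul_of_nonneg (hs 0) ihs (h0 0) hG
      simpa using this
    have hsummable : Summable (fun f : Fin (n+1) → α => ∏ i, g i (f i)) := by
      rw [← e.symm.summable_iff]
      exact hmul.congr fun p => (key p).symm
    refine ⟨hsummable, ?_⟩
    rw [← e.symm.tsum_eq]
    calc (∑' p : α × (Fin n → α), ∏ i, g i (e.symm p i))
        = ∑' p : α × (Fin n → α), g 0 p.1 * ∏ i, g i.succ (p.2 i) := tsum_congr key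
      _ = (∑' a, g 0 a) * ∑' f : Fin n → α, ∏ i, g i.succ (f i) :=
          (Summable.tsum_mul_tsum (hs 0) ihs hmul).symm
      _ = ∏ i, ∑' a, g i a := by rw [iht, ← Fin.prod_univ_succ (f := fun i => ∑' a, g i a)]

lemma aux_summable_zd {d : ℕ} (hd : 1 ≤ d) {c γ : ℝ} (hc : 0 < c) (hγ : 0 < γ) :
    Summable fun w : Fin d → ℤ => Real.exp (-(c * ‖castPt w‖ ^ γ)) := by
  have hd0 : (0:ℝ) < d := by exact_mod_cast hd
  set c' := c / d with hc'def
  have hc' : 0 < c' := div_pos hc hd0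
  have hpi := aux_pi_prod (fun _ : Fin d => fun z : ℤ => Real.exp (-(c' * |(z:ℝ)| ^ γ)))
      (fun i a => (Real.exp_pos _).le) (fun i => aux_summable_int hc' hγ)
  refine Summable.of_nonneg_of_le (fun w => (Real.exp_pos _).le) (fun w => ?_) hpi.1
  rw [← Real.exp_sum]
  apply Real.exp_le_exp.mpr
  have hsum : ∑ i : Fin d, c' * |((w i : ℤ) : ℝ)| ^ γ ≤ c * ‖castPt w‖ ^ γ := by
    have hstep : ∀ i : Fin d, c' * |((w i : ℤ) : ℝ)| ^ γ ≤ c' * ‖castPt w‖ ^ γ := by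
      intro i
      refine mul_le_mul_of_nonneg_left ?_ hc'.le
      refine Real.rpow_le_rpow (abs_nonneg _) ?_ hγ.le
      have := norm_le_pi_norm (castPt w) i
      simpa [castPt, Real.norm_eq_abs] using this
    calc ∑ i : Fin d, c' * |((w i : ℤ) : ℝ)| ^ γ ≤ ∑ _i : Fin d, c' * ‖castPt w‖ ^ γ :=
          Finset.sum_le_sum fun i _ => hstep i
      _ = d * (c' * ‖castPt w‖ ^ γ) := by
          rw [Finset.sum_const, Finset.card_univ, Fintype.card_fin, nsmul_eq_mul]
      _ = c * ‖castPt w‖ ^ γ := by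
          rw [hc'def]; field_simp
  calc -(c * ‖castPt w‖ ^ γ) ≤ -(∑ i : Fin d, c' * |((w i : ℤ) : ℝ)| ^ γ) := by linarith
    _ = ∑ i : Fin d, -(c' * |((w i : ℤ) : ℝ)| ^ γ) := by rw [Finset.sum_neg_distrib]
theorem summable_exp_neg_distH {d n : ℕ} (hd : 1 ≤ d) (hn : 1 ≤ n)
    (μ : ℝ) (hμ : 0 < μ) (γ : ℝ) (hγ : γ ∈ Set.Ioc (0 : ℝ) 1) :
    (∀ x : Fin n → (Fin d → ℤ),
      Summable fun y : Fin n → (Fin d → ℤ) =>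
        Real.exp (-μ * distH (intConfig x) (intConfig y) ^ γ)) ∧
    ∃ C : ℝ, ∀ x : Fin n → (Fin d → ℤ),
      (∑' y : Fin n → (Fin d → ℤ),
        Real.exp (-μ * distH (intConfig x) (intConfig y) ^ γ)) ≤ C := by
  obtain ⟨hγ0, hγ1⟩ := hγ
  have hn0 : (0:ℝ) < n := by exact_mod_cast hn
  haveI : Nonempty (Fin n) := Fin.pos_iff_nonempty.mp hn
  set c := μ / n with hcdef
  have hcpos : 0 < c := div_pos hμ hn0
  have hSsum : Summable fun w : Fin d → ℤ => Real.exp (-(c * ‖castPt w‖ ^ γ)) :=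
    aux_summable_zd hd hcpos hγ0
  set S := ∑' w : Fin d → ℤ, Real.exp (-(c * ‖castPt w‖ ^ γ)) with hSdef
  -- translation invariance
  have htrans : ∀ v : Fin d → ℤ,
      Summable (fun z : Fin d → ℤ => Real.exp (-(c * dist (castPt v) (castPt z) ^ γ))) ∧
      (∑' z : Fin d → ℤ, Real.exp (-(c * dist (castPt v) (castPt z) ^ γ))) = S := by
    intro v
    have key : ∀ w : Fin d → ℤ, dist (castPt v) (castPt (w + v)) = ‖castPt w‖ := by
      intro w
      rw [dist_eq_norm]
      have : castPt v - castPt (w + v) = -(castPt w) := by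
        funext i
        simp only [castPt, Pi.sub_apply, Pi.neg_apply, Pi.add_apply]
        push_cast
        ring
      rw [this, norm_neg]
    set e : (Fin d → ℤ) ≃ (Fin d → ℤ) := Equiv.addRight v with he
    have hcomp : ∀ w : Fin d → ℤ,
        Real.exp (-(c * dist (castPt v) (castPt (e w)) ^ γ)) =
        Real.exp (-(c * ‖castPt w‖ ^ γ)) := by
      intro w
      have : e w = w + v := rfl
      rw [this, key w]
    constructor
    · rw [← e.summable_iff]
      exact hSsum.congr fun w => (hcomp w).symm
    · rw [← e.tsum_eq]
      rw [hSdef]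
      exact tsum_congr hcomp
  -- main per-x estimate
  have main : ∀ x : Fin n → (Fin d → ℤ),
      (Summable fun y : Fin n → (Fin d → ℤ) =>
        Real.exp (-μ * distH (intConfig x) (intConfig y) ^ γ)) ∧
      (∑' y : Fin n → (Fin d → ℤ),
        Real.exp (-μ * distH (intConfig x) (intConfig y) ^ γ)) ≤ ((n : ℝ) * S) ^ n := by
    intro x
    set X := intConfig x with hX
    set a : (Fin d → ℤ) → ℝ := fun z => ⨅ j, dist (X j) (castPt z) with ha
    have ha0 : ∀ z, 0 ≤ a z := fun z => Real.iInf_nonneg fun j => dist_nonneg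
    set g : (Fin d → ℤ) → ℝ := fun z => Real.exp (-(c * a z ^ γ)) with hg
    -- bound g by a finite sum of translates
    have hb : ∀ z : Fin d → ℤ,
        g z ≤ ∑ j, Real.exp (-(c * dist (castPt (x j)) (castPt z) ^ γ)) := by
      intro z
      obtain ⟨j0, -, hj0⟩ := Finset.exists_min_image Finset.univ
        (fun j => dist (X j) (castPt z)) Finset.univ_nonempty
      have h1 : dist (X j0) (castPt z) ≤ a z :=
        le_ciInf fun j => hj0 j (Finset.mem_univ j)
      have h2 : g z ≤ Real.exp (-(c * dist (castPt (x j0)) (castPt z) ^ γ)) := by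
        rw [hg]
        apply Real.exp_le_exp.mpr
        have : dist (castPt (x j0)) (castPt z) ^ γ ≤ a z ^ γ :=
          Real.rpow_le_rpow dist_nonneg h1 hγ0.le
        nlinarith [hcpos]
      refine h2.trans ?_
      exact Finset.single_le_sum
        (f := fun j => Real.exp (-(c * dist (castPt (x j)) (castPt z) ^ γ)))
        (fun j _ => (Real.exp_pos _).le) (Finset.mem_univ j0)
    have hsum2 : Summable fun z : Fin d → ℤ =>
        ∑ j, Real.exp (-(c * dist (castPt (x j)) (castPt z) ^ γ)) :=
      summable_sum fun j _ => (htrans (x j)).1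
    have hgsum : Summable g :=
      Summable.of_nonneg_of_le (fun z => (Real.exp_pos _).le) hb hsum2
    have hgts : (∑' z, g z) ≤ (n : ℝ) * S := by
      calc (∑' z, g z)
          ≤ ∑' z : Fin d → ℤ, ∑ j, Real.exp (-(c * dist (castPt (x j)) (castPt z) ^ γ)) :=
            Summable.tsum_le_tsum hb hgsum hsum2
        _ = ∑ j, ∑' z : Fin d → ℤ, Real.exp (-(c * dist (castPt (x j)) (castPt z) ^ γ)) :=
            Summable.tsum_finsetSum fun j _ => (htrans (x j)).1
        _ = ∑ _j : Fin n, S := Finset.sum_congr rfl fun j _ => (htrans (x j)).2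
        _ = (n : ℝ) * S := by
            rw [Finset.sum_const, Finset.card_univ, Fintype.card_fin, nsmul_eq_mul]
    have hgts0 : 0 ≤ ∑' z, g z := tsum_nonneg fun z => (Real.exp_pos _).le
    -- pointwise bound by a product
    have hpi := aux_pi_prod (fun _ : Fin n => g) (fun i z => (Real.exp_pos _).le)
      (fun i => hgsum)
    have hpt : ∀ y : Fin n → (Fin d → ℤ),
        Real.exp (-μ * distH X (intConfig y) ^ γ) ≤ ∏ k, g (y k) := by
      intro y
      set D := distH X (intConfig y) with hD
      have hak : ∀ k, a (y k) ≤ D := by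
        intro k
        have h1 : a (y k) ≤ ⨆ k, ⨅ j, dist (X j) (intConfig y k) :=
          le_ciSup (f := fun k => ⨅ j, dist (X j) (intConfig y k))
            (Finite.bddAbove_range _) k
        exact h1.trans (le_max_right _ _)
      have hD0 : 0 ≤ D := (ha0 _).trans (hak (Classical.arbitrary _))
      have hsumle : ∑ k, c * a (y k) ^ γ ≤ μ * D ^ γ := by
        have hstep : ∀ k : Fin n, c * a (y k) ^ γ ≤ c * D ^ γ := fun k =>
          mul_le_mul_of_nonneg_left
            (Real.rpow_le_rpow (ha0 _) (hak k) hγ0.le) hcpos.le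
        calc ∑ k, c * a (y k) ^ γ ≤ ∑ _k : Fin n, c * D ^ γ :=
              Finset.sum_le_sum fun k _ => hstep k
          _ = n * (c * D ^ γ) := by
              rw [Finset.sum_const, Finset.card_univ, Fintype.card_fin, nsmul_eq_mul]
          _ = μ * D ^ γ := by rw [hcdef]; field_simp
      calc Real.exp (-μ * D ^ γ) = Real.exp (-(μ * D ^ γ)) := by rw [neg_mul]
        _ ≤ Real.exp (∑ k, -(c * a (y k) ^ γ)) := by
            apply Real.exp_le_exp.mpr
            rw [Finset.sum_neg_distrib]
            linarith
        _ = ∏ k, Real.exp (-(c * a (y k) ^ γ)) := Real.exp_sum _ _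
        _ = ∏ k, g (y k) := rfl
    constructor
    · exact Summable.of_nonneg_of_le (fun y => (Real.exp_pos _).le) hpt hpi.1
    · calc (∑' y : Fin n → (Fin d → ℤ),
            Real.exp (-μ * distH X (intConfig y) ^ γ))
          ≤ ∑' y : Fin n → (Fin d → ℤ), ∏ k, g (y k) :=
            Summable.tsum_le_tsum hpt
              (Summable.of_nonneg_of_le (fun y => (Real.exp_pos _).le) hpt hpi.1) hpi.1
        _ = ∏ _k : Fin n, ∑' z, g z := hpi.2
        _ = (∑' z, g z) ^ n := by
            rw [Finset.prod_const, Finset.card_univ, Fintype.card_fin]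
        _ ≤ ((n : ℝ) * S) ^ n := pow_le_pow_left₀ hgts0 hgts n
  exact ⟨fun x => (main x).1, ⟨((n : ℝ) * S) ^ n, fun x => (main x).2⟩⟩
end

section
/- Let x_1, ..., x_n be points in ℝ^d (with the max-norm) whose diameter max_{j,k} |x_j − x_k| is at least L > 0. Then there exists a partition of {1,...,n} into two nonempty disjoint sets J and K such that |x_j − x_k| ≥ L/n for all j ∈ J and k ∈ K. -/
open Finset

/-- If `n` points in `ℝ^d` (with the max-norm) have diameter at least `L > 0`, then the index
set `{1,…,n}` can be partitioned into two nonempty pieces `J`, `K` such that any point indexed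
by `J` is at distance at least `L/n` from any point indexed by `K`. -/
theorem exists_partition_of_diam_ge {d n : ℕ} (hn : 2 ≤ n)
    (x : Fin n → (Fin d → ℝ)) (L : ℝ) (hL : 0 < L)
    (hdiam : ∃ j k : Fin n, L ≤ dist (x j) (x k)) :
    ∃ J K : Finset (Fin n), J.Nonempty ∧ K.Nonempty ∧ Disjoint J K ∧ J ∪ K = Finset.univ ∧
      ∀ j ∈ J, ∀ k ∈ K, L / n ≤ dist (x j) (x k) := by
  obtain ⟨j₀, k₀, hjk⟩ := hdiam
  have hn0 : 0 < n := by omega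
  have hnR : (0:ℝ) < n := by exact_mod_cast hn0
  -- find a coordinate where the distance is at least L
  have hcoord : ∃ i₀ : Fin d, L ≤ dist (x j₀ i₀) (x k₀ i₀) := by
    by_contra h
    push_neg at h
    have := (dist_pi_lt_iff hL).2 (fun b => h b)
    linarith
  obtain ⟨i₀, hi₀⟩ := hcoord
  set y : Fin n → ℝ := fun m => x m i₀ with hy
  have huniv : ((Finset.univ : Finset (Fin n)).image y).Nonempty :=
    Finset.Nonempty.image ⟨j₀, mem_univ _⟩ y
  set a := Finset.min' (univ.image y) huniv with ha
  set b := Finset.max' (univ.image y) huniv with hb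
  have hay : ∀ m, a ≤ y m := fun m => min'_le _ _ (mem_image_of_mem y (mem_univ m))
  have hyb : ∀ m, y m ≤ b := fun m => le_max' _ _ (mem_image_of_mem y (mem_univ m))
  have hba : L ≤ b - a := by
    have h1 := hay j₀; have h2 := hay k₀; have h3 := hyb j₀; have h4 := hyb k₀
    have h5 : dist (y j₀) (y k₀) ≤ b - a := by
      rw [Real.dist_eq, abs_sub_le_iff]
      constructor <;> linarith
    have h6 : L ≤ dist (y j₀) (y k₀) := hi₀
    linarith
  set c := L / n with hc
  have hc0 : 0 < c := div_pos hL hnR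
  set f : Fin n → ℕ := fun m => ⌊(y m - a)/c⌋₊ with hf
  have hfl : ∀ m, (f m : ℝ) * c ≤ y m - a := by
    intro m
    have h1 : (f m : ℝ) ≤ (y m - a)/c :=
      Nat.floor_le (div_nonneg (sub_nonneg.2 (hay m)) hc0.le)
    calc (f m : ℝ) * c ≤ ((y m - a)/c) * c := by nlinarith
      _ = y m - a := div_mul_cancel₀ _ hc0.ne'
  have hfu : ∀ m, y m - a < ((f m : ℝ) + 1) * c := by
    intro m
    have h1 : (y m - a)/c < (f m : ℝ) + 1 := Nat.lt_floor_add_one _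
    exact (div_lt_iff₀ hc0).1 h1
  -- the min point has f = 0
  obtain ⟨m₀, -, hm₀⟩ := Finset.mem_image.1 (Finset.min'_mem (univ.image y) huniv)
  obtain ⟨m₁, -, hm₁⟩ := Finset.mem_image.1 (Finset.max'_mem (univ.image y) huniv)
  have hfm₀ : f m₀ = 0 := by
    simp only [hf]
    rw [hm₀]
    simp [← ha]
  have hfm₁ : n ≤ f m₁ := by
    apply Nat.le_floor
    rw [le_div_iff₀ hc0, hm₁, hc]
    rw [mul_div_cancel₀ _ hnR.ne']
    linarith
  -- there is a missing value i in range n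
  have hcard : ¬ (Finset.range n ⊆ Finset.image f univ) := by
    intro hsub
    have h1 : Finset.range n ⊆ (Finset.image f univ).erase (f m₁) := by
      intro i hi
      refine Finset.mem_erase.2 ⟨?_, hsub hi⟩
      intro he
      rw [he] at hi
      have := Finset.mem_range.1 hi
      omega
    have h2 := Finset.card_le_card h1
    have h3 := Finset.card_erase_of_mem (mem_image_of_mem f (mem_univ m₁))
    have h4 : (Finset.image f univ).card ≤ n := by
      have := Finset.card_image_le (f := f) (s := (univ : Finset (Fin n)))
      simpa using this
    rw [Finset.card_range] at h2
    omega
  obtain ⟨i, hir, hiim⟩ := Finset.not_subset.1 hcard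
  have hfi : ∀ m, f m ≠ i := fun m he => hiim (Finset.mem_image.2 ⟨m, mem_univ m, he⟩)
  have hi1 : 1 ≤ i := by
    rcases Nat.eq_zero_or_pos i with h | h
    · exact absurd (hfm₀.trans h.symm) (hfi m₀)
    · exact h
  refine ⟨univ.filter (fun m => f m < i), univ.filter (fun m => i < f m), ?_, ?_, ?_, ?_, ?_⟩
  · exact ⟨m₀, Finset.mem_filter.2 ⟨mem_univ _, by omega⟩⟩
  · refine ⟨m₁, Finset.mem_filter.2 ⟨mem_univ _, ?_⟩⟩
    have := Finset.mem_range.1 hir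
    omega
  · refine Finset.disjoint_left.2 ?_
    intro m hm hm'
    have h1 := (Finset.mem_filter.1 hm).2
    have h2 := (Finset.mem_filter.1 hm').2
    omega
  · ext m
    simp only [Finset.mem_union, Finset.mem_filter, Finset.mem_univ, true_and]
    have := hfi m
    constructor
    · intro _; trivial
    · intro _; omega
  · intro j hj k hk
    have h1 := (Finset.mem_filter.1 hj).2
    have h2 := (Finset.mem_filter.1 hk).2
    have hjk2 : f j + 2 ≤ f k := by omega
    have hjk2R : (f j : ℝ) + 2 ≤ (f k : ℝ) := by exact_mod_cast hjk2
    have h3 := hfl k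
    have h4 := hfu j
    have h5 : c ≤ y k - y j := by nlinarith
    have h6 : c ≤ dist (y j) (y k) := by
      rw [Real.dist_eq]
      refine le_abs.2 (Or.inr ?_)
      linarith
    calc L / n = c := rfl
      _ ≤ dist (y j) (y k) := h6
      _ ≤ dist (x j) (x k) := dist_le_pi_dist (x j) (x k) i₀
end
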